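/- In A = K[x]/(x^{n+1}) (n ≥ 2) with maximal ideal m = (x) and Soc A = ⟨x^n⟩, for any two hyperplanes U, U' of m complementary to ⟨x^n⟩ there exists a K-algebra automorphism φ of A with φ(U) = U'. -/

import Mathlib

set_option synthInstance.maxHeartbeats 1000000
set_option maxHeartbeats 1000000

open Polynomial Finset

section Generic
variable {K : Type*} [Field K] {A : Type*} [CommRing A] [Algebra K A]

lemma castsmul (s : K) (z : A) : s • z = algebraMap K A s * z := Algebra.smul_def s z

lemma natcastA (m : ℕ) : ((m : ℕ) : A) = algebraMap K A ((m : ℕ) : K) := (map_natCast _ _).symm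

lemma expandE (x : A) (cc : K) (k' : ℕ) (hk' : 2 ≤ k') (j : ℕ) (hj : 1 ≤ j) :
    ∃ w ∈ Submodule.span K ((fun e => x ^ e) '' {e | j + 2 * k' - 2 ≤ e}),
      (x + cc • x ^ k') ^ j = x ^ j + ((j : K) * cc) • x ^ (j + k' - 1) + w := by
  obtain ⟨j', rfl⟩ : ∃ j', j = j' + 1 := ⟨j - 1, by omega⟩
  have h := add_pow x (cc • x ^ k') (j' + 1)
  rw [Finset.sum_range_succ, Finset.sum_range_succ] at h
  refine ⟨∑ i ∈ Finset.range j', x ^ i * (cc • x ^ k') ^ (j' + 1 - i) * ((j' + 1).choose i : A),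
    ?_, ?_⟩
  · apply Submodule.sum_mem
    intro i hi
    rw [Finset.mem_range] at hi
    have hterm : x ^ i * (cc • x ^ k') ^ (j' + 1 - i) * ((j' + 1).choose i : A)
        = (cc ^ (j' + 1 - i) * ((j' + 1).choose i : K)) • x ^ (i + k' * (j' + 1 - i)) := by
      rw [castsmul, castsmul, natcastA (K := K), map_mul, map_pow, pow_add, pow_mul']
      ring
    rw [hterm]
    apply Submodule.smul_mem
    apply Submodule.subset_span
    refine ⟨i + k' * (j' + 1 - i), ?_, rfl⟩
    have hd : 2 ≤ j' + 1 - i := by omega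
    set d := j' + 1 - i with hdef
    have h1 : k' * d = k' * (d - 2) + k' * 2 := by
      rw [← Nat.mul_add]; congr 1; omega
    have h2 : d - 2 ≤ k' * (d - 2) := Nat.le_mul_of_pos_left _ (by omega)
    simp only [Set.mem_setOf_eq]
    omega
  · rw [h]
    have h1 : x ^ (j' + 1) * (cc • x ^ k') ^ (j' + 1 - (j' + 1)) * ((j' + 1).choose (j' + 1) : A)
        = x ^ (j' + 1) := by simp
    have h2 : x ^ j' * (cc • x ^ k') ^ (j' + 1 - j') * ((j' + 1).choose j' : A)
        = (((j' + 1 : ℕ) : K) * cc) • x ^ (j' + 1 + k' - 1) := by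
      have he : j' + 1 + k' - 1 = j' + k' := by omega
      rw [he, Nat.choose_succ_self_right,
        show (j' + 1 - j') = 1 from by omega, pow_one]
      rw [castsmul, castsmul, natcastA (K := K), map_mul, pow_add]
      ring
    rw [h1, h2]
    ring

lemma downG (x : A) (n : ℕ) (hx : x ^ (n + 1) = 0) (cc : K) (k' : ℕ) (hk' : 2 ≤ k')
    (R : Submodule K A) (hR : ∀ j, 1 ≤ j → (x + cc • x ^ k') ^ j ∈ R) :
    ∀ j, 1 ≤ j → x ^ j ∈ R := by
  suffices h : ∀ d j, n + 1 ≤ j + d → 1 ≤ j → x ^ j ∈ R by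
    intro j hj; exact h (n + 1) j (by omega) hj
  intro d
  induction d with
  | zero =>
    intro j h1 h2
    have : x ^ j = 0 := by
      have : x ^ j = x ^ (n + 1) * x ^ (j - (n + 1)) := by rw [← pow_add]; congr 1; omega
      rw [this, hx, zero_mul]
    rw [this]; exact R.zero_mem
  | succ d ih =>
    intro j h1 h2
    by_cases hj' : n + 1 ≤ j + d
    · exact ih j hj' h2
    obtain ⟨w, hw, hE⟩ := expandE x cc k' hk' j h2
    have hxj : x ^ j = (x + cc • x ^ k') ^ j - ((j : K) * cc) • x ^ (j + k' - 1) - w := by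
      rw [hE]; ring
    have hmem1 : x ^ (j + k' - 1) ∈ R := ih _ (by omega) (by omega)
    have hmem2 : w ∈ R := by
      refine Submodule.span_le.mpr ?_ hw
      rintro _ ⟨e, he, rfl⟩
      simp only [Set.mem_setOf_eq] at he
      exact ih e (by omega) (by omega)
    rw [hxj]
    exact sub_mem (sub_mem (hR j h2) (R.smul_mem _ hmem1)) hmem2

end Generic

section QuotSec
variable {K : Type*} [Field K] {n : ℕ}

local notation "II" => Ideal.span ({X ^ (n+1)} : Set (Polynomial K))
local notation "AA" => Polynomial K ⧸ (II)
local notation "qq" => Ideal.Quotient.mk (II)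

lemma qq_X_pow_zero : ((qq X : AA)) ^ (n + 1) = 0 := by
  rw [← map_pow]
  rw [Ideal.Quotient.eq_zero_iff_mem]
  exact Ideal.subset_span rfl

lemma qq_X_pow_n_ne_zero : ((qq X : AA)) ^ n ≠ 0 := by
  intro h
  rw [← map_pow, Ideal.Quotient.eq_zero_iff_mem, Ideal.mem_span_singleton] at h
  have hne : (X : Polynomial K) ^ n ≠ 0 := pow_ne_zero _ Polynomial.X_ne_zero
  have := Polynomial.natDegree_le_of_dvd h hne
  simp [Polynomial.natDegree_X_pow] at this

lemma qq_span_top : Submodule.span K (Set.range fun i : Fin (n+1) => ((qq (X ^ (i:ℕ)) : AA))) = ⊤ := by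
  rw [eq_top_iff]
  rintro a -
  obtain ⟨p, rfl⟩ := Ideal.Quotient.mk_surjective a
  have hrw : (qq p : AA) = ∑ i ∈ p.support, p.coeff i • qq (X ^ i) := by
    conv_lhs => rw [p.as_sum_support_C_mul_X_pow]
    rw [map_sum]
    refine Finset.sum_congr rfl fun i _ => ?_
    rw [map_mul]
    exact (Algebra.smul_def (p.coeff i) (qq (X ^ i) : AA)).symm
  rw [hrw]
  apply Submodule.sum_mem
  intro i _
  apply Submodule.smul_mem
  by_cases hi : i ≤ n
  · exact Submodule.subset_span ⟨⟨i, by omega⟩, rfl⟩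
  · have h0 : (qq (X ^ i) : AA) = 0 := by
      rw [map_pow]
      have : (qq X : AA) ^ i = (qq X) ^ (n+1) * (qq X) ^ (i - (n+1)) := by
        rw [← pow_add]; congr 1; omega
      rw [this, qq_X_pow_zero, zero_mul]
    rw [h0]; exact Submodule.zero_mem _

lemma finiteAA : Module.Finite K AA := by
  classical
  rw [Module.finite_def]
  refine ⟨(Finset.range (n+1)).image (fun i => (qq (X ^ i) : AA)), ?_⟩
  rw [eq_top_iff, ← qq_span_top (K := K) (n := n)]
  apply Submodule.span_le.mpr
  rintro _ ⟨i, rfl⟩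
  apply Submodule.subset_span
  simp only [Finset.coe_image, Set.mem_image, Finset.mem_coe, Finset.mem_range]
  exact ⟨(i : ℕ), by omega, rfl⟩


noncomputable def thetaHom (a : AA) (ha : a ^ (n + 1) = 0) : AA →ₐ[K] AA :=
  Ideal.Quotient.liftₐ (II) (Polynomial.aeval a) (by
    intro p hp
    rw [Ideal.mem_span_singleton] at hp
    obtain ⟨r, rfl⟩ := hp
    rw [map_mul, map_pow, Polynomial.aeval_X, ha, zero_mul])

lemma thetaHom_apply (a : AA) (ha : a ^ (n + 1) = 0) (p : Polynomial K) :
    thetaHom a ha (qq p) = Polynomial.aeval a p := by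
  simp [thetaHom, Ideal.Quotient.liftₐ_apply]
  rfl

lemma xe_zero (e : ℕ) (he : n + 1 ≤ e) : ((qq X : AA)) ^ e = 0 :=
  pow_eq_zero_of_le he qq_X_pow_zero

lemma a_pow_zero (cc : K) (k' : ℕ) (hk' : 2 ≤ k') :
    ((qq X : AA) + cc • (qq X) ^ k') ^ (n + 1) = 0 := by
  obtain ⟨w, hw, hE⟩ := expandE (qq X : AA) cc k' hk' (n + 1) (by omega)
  have hwz : w = 0 := by
    have hle : Submodule.span K ((fun e => ((qq X : AA)) ^ e) '' {e | n + 1 + 2 * k' - 2 ≤ e}) ≤ ⊥ := by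
      rw [Submodule.span_le]
      rintro _ ⟨e, he, rfl⟩
      simp only [Set.mem_setOf_eq] at he
      simp only [SetLike.mem_coe, Submodule.mem_bot]
      exact xe_zero e (by omega)
    simpa using hle hw
  rw [hE, hwz, xe_zero (n + 1) le_rfl, xe_zero (n + 1 + k' - 1) (by omega)]
  simp

lemma adjoin_qqX_top : Algebra.adjoin K {(qq X : AA)} = ⊤ := by
  have h1 := AlgHom.map_adjoin (Ideal.Quotient.mkₐ K (II)) ({X} : Set (Polynomial K))
  rw [Polynomial.adjoin_X, Algebra.map_top, Set.image_singleton] at h1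
  rw [(AlgHom.range_eq_top _).mpr (Ideal.Quotient.mkₐ_surjective K (II))] at h1
  simp only [Ideal.Quotient.mkₐ_eq_mk] at h1
  exact h1.symm

lemma theta_surj (cc : K) (k' : ℕ) (hk' : 2 ≤ k') :
    Function.Surjective (thetaHom ((qq X : AA) + cc • (qq X) ^ k') (a_pow_zero cc k' hk')) := by
  set a := (qq X : AA) + cc • (qq X) ^ k' with hadef
  set f := thetaHom (n := n) a (a_pow_zero cc k' hk') with hfdef
  rw [← AlgHom.range_eq_top]
  have haR : a ∈ f.range := by
    rw [AlgHom.mem_range]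
    exact ⟨qq X, by rw [hfdef, thetaHom_apply]; simp [hadef]⟩
  have hx : (qq X : AA) ∈ f.range := by
    have := downG (qq X : AA) n qq_X_pow_zero cc k' hk'
      (Subalgebra.toSubmodule f.range) (fun j _ => by
        simpa using (Subalgebra.pow_mem f.range haR j)) 1 le_rfl
    simpa using this
  rw [eq_top_iff, ← adjoin_qqX_top (K := K) (n := n)]
  exact Algebra.adjoin_le (by simpa using hx)

noncomputable def thetaEq (cc : K) (k' : ℕ) (hk' : 2 ≤ k') : AA ≃ₐ[K] AA :=
  AlgEquiv.ofBijective (thetaHom ((qq X : AA) + cc • (qq X) ^ k') (a_pow_zero cc k' hk'))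
    (by
      constructor
      · haveI := finiteAA (K := K) (n := n)
        have hsurj := theta_surj (n := n) cc k' hk'
        exact LinearMap.injective_iff_surjective
          (f := (thetaHom ((qq X : AA) + cc • (qq X) ^ k')
            (a_pow_zero cc k' hk')).toLinearMap).mpr hsurj
      · exact theta_surj (n := n) cc k' hk')

lemma thetaEq_apply (cc : K) (k' : ℕ) (hk' : 2 ≤ k') (p : Polynomial K) :
    thetaEq cc k' hk' (qq p) = Polynomial.aeval ((qq X : AA) + cc • (qq X) ^ k') p := by
  exact thetaHom_apply _ (a_pow_zero cc k' hk') p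

end QuotSec

/-- In `A = K[x]/(x^{n+1})` (`n ≥ 2`) with maximal ideal
`m = ⟨x, x^2, ..., x^n⟩_K` and `Soc A = ⟨x^n⟩`, for any two hyperplanes `U, U'` of `m`
complementary to `⟨x^n⟩` there exists a `K`-algebra automorphism `φ` of `A` with
`φ(U) = U'`. -/
theorem stmt16 (K : Type*) [Field K] [CharZero K] (n : ℕ) (hn : 2 ≤ n) :
    let I : Ideal (Polynomial K) := Ideal.span {Polynomial.X ^ (n + 1)};
    let A := Polynomial K ⧸ I;
    let q : Polynomial K →+* A := Ideal.Quotient.mk I;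
    let m : Submodule K A :=
      Submodule.span K (Set.range fun i : Fin n => q (Polynomial.X ^ ((i : ℕ) + 1)));
    let c : A := q (Polynomial.X ^ n);
    ∀ U U' : Submodule K A,
      U ⊔ Submodule.span K {c} = m → U ⊓ Submodule.span K {c} = ⊥ →
      U' ⊔ Submodule.span K {c} = m → U' ⊓ Submodule.span K {c} = ⊥ →
      ∃ φ : A ≃ₐ[K] A, U.map φ.toLinearMap = U' := by
  intro I A q m c U U' hU1 hU2 hU3 hU4
  set x : A := q Polynomial.X with hxdef
  have hxc : c = x ^ n := (map_pow q Polynomial.X n).symm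
  have hxnil : x ^ (n + 1) = 0 := qq_X_pow_zero
  have hx0 : ∀ e, n + 1 ≤ e → x ^ e = 0 := fun e he => xe_zero e he
  have hcne : c ≠ 0 := by rw [hxc]; exact qq_X_pow_n_ne_zero
  have hxm : ∀ e, 1 ≤ e → x ^ e ∈ m := by
    intro e he
    by_cases hle : e ≤ n
    · apply Submodule.subset_span
      have hg : q (Polynomial.X ^ (e - 1 + 1)) = x ^ e := by rw [map_pow]; congr 1; omega
      exact ⟨⟨e - 1, by omega⟩, hg⟩
    · rw [hx0 e (by omega)]; exact m.zero_mem
  have hcm : c ∈ m := by rw [hxc]; exact hxm n (by omega)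
  have hexist : ∀ W : Submodule K A, W ⊔ Submodule.span K {c} = m →
      ∀ j, 1 ≤ j → j ≤ n → ∃ t : K, x ^ j + t • c ∈ W := by
    intro W hW j h1 h2
    have hxjm : x ^ j ∈ m := hxm j h1
    rw [← hW] at hxjm
    obtain ⟨w, hwW, z, hz, hsum⟩ := Submodule.mem_sup.mp hxjm
    obtain ⟨s, rfl⟩ := Submodule.mem_span_singleton.mp hz
    refine ⟨-s, ?_⟩
    have : x ^ j + (-s) • c = w := by rw [neg_smul, ← hsum]; abel
    rw [this]; exact hwW
  have hexU' : ∀ j : ℕ, ∃ t : K, 1 ≤ j → j ≤ n → x ^ j + t • c ∈ U' := by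
    intro j
    by_cases h : 1 ≤ j ∧ j ≤ n
    · obtain ⟨t, ht⟩ := hexist U' hU3 j h.1 h.2
      exact ⟨t, fun _ _ => ht⟩
    · exact ⟨0, fun ha hb => absurd ⟨ha, hb⟩ h⟩
  choose μ hμ using hexU'
  have main : ∀ k, 1 ≤ k → k ≤ n →
      ∀ W : Submodule K A, W ⊔ Submodule.span K {c} = m → W ⊓ Submodule.span K {c} = ⊥ →
        (∀ j, k ≤ j → j ≤ n - 1 → x ^ j + μ j • c ∈ W) →
        ∃ φ : A ≃ₐ[K] A, W.map φ.toLinearMap = U' := by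
    intro k hk1
    induction k, hk1 using Nat.le_induction with
    | base =>
      intro _ W hW1 hW2 hWcoord
      have hWU' : W = U' := by
        have hWle : W ≤ U' := by
          intro w hw
          have hwm : w ∈ m := by rw [← hW1]; exact Submodule.mem_sup_left hw
          set S : Submodule K A :=
            Submodule.span K ((fun j => x ^ j + μ j • c) '' {j | 1 ≤ j ∧ j ≤ n - 1}) with hSdef
          have hSW : S ≤ W := Submodule.span_le.mpr (by
            rintro _ ⟨j, ⟨hj1, hj2⟩, rfl⟩; exact hWcoord j hj1 hj2)
          have hSU' : S ≤ U' := Submodule.span_le.mpr (by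
            rintro _ ⟨j, ⟨hj1, hj2⟩, rfl⟩; exact hμ j hj1 (by omega))
          have hmS : m ≤ S ⊔ Submodule.span K {c} := by
            apply Submodule.span_le.mpr
            rintro _ ⟨i, rfl⟩
            have hg : q (Polynomial.X ^ ((i : ℕ) + 1)) = x ^ ((i : ℕ) + 1) := by rw [map_pow]
            simp only [SetLike.mem_coe]
            rw [hg]
            by_cases hi : (i : ℕ) + 1 ≤ n - 1
            · have hu : x ^ ((i : ℕ) + 1) + μ ((i : ℕ) + 1) • c ∈ S :=
                Submodule.subset_span ⟨(i : ℕ) + 1, ⟨by omega, hi⟩, rfl⟩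
              have hrw : x ^ ((i : ℕ) + 1) =
                  (x ^ ((i : ℕ) + 1) + μ ((i : ℕ) + 1) • c) + (-(μ ((i : ℕ) + 1))) • c := by
                rw [neg_smul]; abel
              rw [hrw]
              exact Submodule.add_mem _ (Submodule.mem_sup_left hu)
                (Submodule.mem_sup_right (Submodule.smul_mem _ _
                  (Submodule.mem_span_singleton_self c)))
            · have hieq : (i : ℕ) + 1 = n := by have := i.isLt; omega
              rw [hieq, ← hxc]
              exact Submodule.mem_sup_right (Submodule.mem_span_singleton_self c)
          obtain ⟨s, hsS, z, hz, hsum⟩ := Submodule.mem_sup.mp (hmS hwm)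
          obtain ⟨t, rfl⟩ := Submodule.mem_span_singleton.mp hz
          have htc : t • c ∈ W ⊓ Submodule.span K {c} := Submodule.mem_inf.mpr
            ⟨by rw [show t • c = w - s from by rw [← hsum]; abel]
                exact W.sub_mem hw (hSW hsS),
             Submodule.smul_mem _ _ (Submodule.mem_span_singleton_self c)⟩
          rw [hW2, Submodule.mem_bot] at htc
          have hws : w = s := by rw [← hsum, htc, add_zero]
          rw [hws]; exact hSU' hsS
        have hU'm : U' ≤ m := by rw [← hU3]; exact le_sup_left
        have hmod : (W ⊔ Submodule.span K {c}) ⊓ U' = W ⊔ (Submodule.span K {c} ⊓ U') :=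
          sup_inf_assoc_of_le _ hWle
        rw [hW1, inf_comm (Submodule.span K {c}) U', hU4, sup_bot_eq] at hmod
        rw [inf_eq_right.mpr hU'm] at hmod
        exact hmod.symm.trans rfl ▸ hmod.symm
      refine ⟨AlgEquiv.refl, ?_⟩
      have hid : (AlgEquiv.refl : A ≃ₐ[K] A).toLinearMap = LinearMap.id := rfl
      rw [hid, Submodule.map_id, hWU']
    | succ k hk ih =>
      intro hkn W hW1 hW2 hWcoord
      obtain ⟨lam, hlam⟩ := hexist W hW1 k (by omega) (by omega)
      set k' := n + 1 - k with hk'def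
      have hk'2 : 2 ≤ k' := by omega
      set cc := (μ k - lam) / (k : K) with hccdef
      set a : A := x + cc • x ^ k' with hadef
      set θ : A ≃ₐ[K] A := thetaEq cc k' hk'2 with hθdef
      have hθp : ∀ p : Polynomial K, θ (q p) = Polynomial.aeval a p := fun p =>
        thetaEq_apply cc k' hk'2 p
      have hθx : θ x = a := by rw [hθp Polynomial.X, Polynomial.aeval_X]
      have hθxp : ∀ e : ℕ, θ (x ^ e) = a ^ e := fun e => by rw [map_pow, hθx]
      have hMle : ∀ (t : ℕ) (W' : Submodule K A), (∀ e, t ≤ e → x ^ e ∈ W') →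
          Submodule.span K ((fun e => x ^ e) '' {e | t ≤ e}) ≤ W' := by
        intro t W' hgen
        rw [Submodule.span_le]
        rintro _ ⟨e, he, rfl⟩
        exact hgen e he
      have hEn : ∀ j, 1 ≤ j → n + 1 ≤ j + k' - 1 → a ^ j = x ^ j := by
        intro j hj hjk
        obtain ⟨w, hw, hE⟩ := expandE x cc k' hk'2 j hj
        have hw0 : w = 0 := by
          have := hMle (j + 2 * k' - 2) ⊥
            (fun e he => by rw [Submodule.mem_bot]; exact hx0 e (by omega)) hw
          simpa using this
        rw [hE, hw0, hx0 (j + k' - 1) hjk, smul_zero, add_zero, add_zero]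
      have hEk : a ^ k = x ^ k + ((k : K) * cc) • c := by
        obtain ⟨w, hw, hE⟩ := expandE x cc k' hk'2 k (by omega)
        have hw0 : w = 0 := by
          have := hMle (k + 2 * k' - 2) ⊥
            (fun e he => by rw [Submodule.mem_bot]; exact hx0 e (by omega)) hw
          simpa using this
        have hexp : k + k' - 1 = n := by omega
        rw [hE, hw0, add_zero, hexp, hxc]
      have hccval : (k : K) * cc = μ k - lam := by
        rw [hccdef]
        have hkne : (k : K) ≠ 0 := Nat.cast_ne_zero.mpr (by omega)
        field_simp
      have hθc : θ c = c := by
        rw [hxc, hθxp, hEn n (by omega) (by omega)]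
      have hapow_m : ∀ j, 1 ≤ j → a ^ j ∈ m := by
        intro j hj
        obtain ⟨w, hw, hE⟩ := expandE x cc k' hk'2 j hj
        have hwm : w ∈ m := hMle _ m (fun e he => hxm e (by omega)) hw
        rw [hE]
        by_cases hbig : n + 1 ≤ j + k' - 1
        · rw [hx0 _ hbig, smul_zero, add_zero]
          exact Submodule.add_mem _ (hxm j hj) hwm
        · exact Submodule.add_mem _ (Submodule.add_mem _ (hxm j hj)
            (Submodule.smul_mem _ _ (hxm _ (by omega)))) hwm
      have hmap_m : m.map θ.toLinearMap = m := by
        apply le_antisymm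
        · rw [Submodule.map_le_iff_le_comap]
          apply Submodule.span_le.mpr
          rintro _ ⟨i, rfl⟩
          simp only [SetLike.mem_coe, Submodule.mem_comap]
          have hg : q (Polynomial.X ^ ((i : ℕ) + 1)) = x ^ ((i : ℕ) + 1) := by rw [map_pow]
          rw [hg]
          show θ (x ^ ((i : ℕ) + 1)) ∈ m
          rw [hθxp]
          exact hapow_m _ (by omega)
        · have hR := downG x n hxnil cc k' hk'2 (m.map θ.toLinearMap) (fun j hj => by
            rw [← hθxp j]
            exact Submodule.mem_map_of_mem (hxm j hj))
          apply Submodule.span_le.mpr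
          rintro _ ⟨i, rfl⟩
          simp only [SetLike.mem_coe]
          have hg : q (Polynomial.X ^ ((i : ℕ) + 1)) = x ^ ((i : ℕ) + 1) := by rw [map_pow]
          rw [hg]
          exact hR _ (by omega)
      have hmap_c : (Submodule.span K {c}).map θ.toLinearMap = Submodule.span K {c} := by
        have himg : (⇑θ.toLinearMap) '' ({c} : Set A) = {c} := by
          rw [Set.image_singleton]
          exact congrArg (fun z => ({z} : Set A)) hθc
        rw [Submodule.map_span, himg]
      have hV1 : (W.map θ.toLinearMap) ⊔ Submodule.span K {c} = m := by
        rw [← hmap_c, ← Submodule.map_sup, hW1, hmap_m]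
      have hV2 : (W.map θ.toLinearMap) ⊓ Submodule.span K {c} = ⊥ := by
        rw [eq_bot_iff]
        intro v hv
        obtain ⟨hvV, hvc⟩ := Submodule.mem_inf.mp hv
        obtain ⟨w, hwW, rfl⟩ := Submodule.mem_map.mp hvV
        obtain ⟨t, htv⟩ := Submodule.mem_span_singleton.mp hvc
        have hwtc : w = t • c := by
          apply θ.injective
          rw [map_smul, hθc]
          exact htv.symm
        have hmem : w ∈ W ⊓ Submodule.span K {c} := Submodule.mem_inf.mpr
          ⟨hwW, by rw [hwtc]; exact Submodule.smul_mem _ _ (Submodule.mem_span_singleton_self c)⟩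
        rw [hW2, Submodule.mem_bot] at hmem
        rw [Submodule.mem_bot]
        rw [hmem]
        exact map_zero _
      have hVcoord : ∀ j, k ≤ j → j ≤ n - 1 → x ^ j + μ j • c ∈ W.map θ.toLinearMap := by
        intro j hj1 hj2
        by_cases hjk : j = k
        · subst hjk
          have hmem := Submodule.mem_map_of_mem (f := θ.toLinearMap) hlam
          have hcalc : θ (x ^ j + lam • c) = x ^ j + μ j • c := by
            rw [map_add, map_smul, hθxp, hθc, hEk, hccval, add_assoc, ← add_smul,
              sub_add_cancel]
          rw [show θ.toLinearMap (x ^ j + lam • c) = θ (x ^ j + lam • c) from rfl, hcalc] at hmem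
          exact hmem
        · have hWj := hWcoord j (by omega) hj2
          have hmem := Submodule.mem_map_of_mem (f := θ.toLinearMap) hWj
          have hcalc : θ (x ^ j + μ j • c) = x ^ j + μ j • c := by
            rw [map_add, map_smul, hθxp, hθc, hEn j (by omega) (by omega)]
          rw [show θ.toLinearMap (x ^ j + μ j • c) = θ (x ^ j + μ j • c) from rfl, hcalc] at hmem
          exact hmem
      obtain ⟨ψ, hψ⟩ := ih (by omega) (W.map θ.toLinearMap) hV1 hV2 hVcoord
      refine ⟨θ.trans ψ, ?_⟩
      rw [show (θ.trans ψ).toLinearMap = ψ.toLinearMap.comp θ.toLinearMap from rfl,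
        Submodule.map_comp]
      exact hψ
  exact main n (by omega) le_rfl U hU1 hU2 (fun j hj1 hj2 => by omega)
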